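/- Let S be a Noetherian normal domain and P a height-one prime ideal of S. Then Γ(S,P) ≠ S; that is, there exists an element of the fraction field of S not in S that lies in S[a⁻¹] for every a ∈ P. -/

import Mathlib

noncomputable section

def locAt (R K : Type) [CommRing R] [Field K] [Algebra R K] (r : R) : Subring K :=
  (Algebra.adjoin R {(algebraMap R K r)⁻¹}).toSubring

def Gamma (R K : Type) [CommRing R] [Field K] [Algebra R K] (I : Ideal R) : Set K :=
  ⋂ (r : R) (_ : r ∈ I) (_ : r ≠ 0), (locAt R K r : Set K)

/-- If `S` is a Noetherian normal domain and `P` a height-one prime (nonzero, with no prime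
strictly between `⊥` and `P`), then `Γ(S,P) ≠ S`: there is an element of the fraction field
not in `S` lying in `S[a⁻¹]` for every nonzero `a ∈ P`. -/
theorem gamma_ne_self_of_height_one (S K : Type) [CommRing S] [IsDomain S] [IsNoetherianRing S]
    [IsIntegrallyClosed S] [Field K] [Algebra S K] [IsFractionRing S K]
    (P : Ideal S) (hP : P.IsPrime) (hP0 : P ≠ ⊥)
    (hht : ∀ Q : Ideal S, Q.IsPrime → Q < P → Q = ⊥) :
    ∃ x : K, x ∈ Gamma S K P ∧ x ∉ Set.range (algebraMap S K) := by
  classical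
  obtain ⟨a, haP, ha0⟩ := Submodule.exists_mem_ne_zero_of_ne_bot hP0
  -- primary decomposition of (a), made irredundant
  obtain ⟨s, hs, hsprim⟩ : ∃ s : Finset (Ideal S), s.inf id = Ideal.span {a} ∧
      ∀ ⦃J : Ideal S⦄, J ∈ s → J.IsPrimary := Submodule.isLasker S S (Ideal.span {a})
  obtain ⟨t, hts, ht, htmin⟩ : ∃ t : Finset (Ideal S), t ⊆ s ∧ t.inf id = Ideal.span {a} ∧
      ∀ ⦃J : Ideal S⦄, J ∈ t → ¬ (t.erase J).inf id ≤ J := Ideal.decomposition_erase_inf hs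
  have htprim : ∀ ⦃J⦄, J ∈ t → J.IsPrimary := fun J hJ => hsprim (hts hJ)
  -- find the P-primary component
  have hinfP : t.inf id ≤ P := by
    rw [ht]; exact Ideal.span_le.mpr (by simpa using haP)
  obtain ⟨J₀, hJ₀t, hJ₀P⟩ := hP.inf_le'.mp hinfP
  have hale : Ideal.span {a} ≤ J₀ := by
    rw [← ht]; exact Finset.inf_le hJ₀t
  have hradP : J₀.radical = P := by
    have hpr : (J₀.radical).IsPrime := Ideal.isPrime_radical (htprim hJ₀t)
    have hle : J₀.radical ≤ P := by
      have := Ideal.radical_mono hJ₀P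
      rwa [hP.radical] at this
    rcases eq_or_lt_of_le hle with h | h
    · exact h
    · exfalso
      have hbot := hht _ hpr h
      have : a ∈ J₀.radical := Ideal.le_radical (hale (Ideal.mem_span_singleton_self a))
      rw [hbot] at this
      exact ha0 (by simpa using this)
  -- pick b in the other components, not in J₀
  have hnle := htmin hJ₀t
  obtain ⟨b, hbmem, hbJ₀⟩ := SetLike.not_le_iff_exists.mp hnle
  have hbna : b ∉ Ideal.span {a} := fun h => hbJ₀ (hale h)
  -- key divisibility: for any c ∈ P, some power of c times b lies in (a)
  have key : ∀ c ∈ P, ∃ n : ℕ, ∃ d : S, c ^ n * b = a * d := by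
    intro c hc
    rw [← hradP] at hc
    obtain ⟨n, hn⟩ := hc
    have hmem : c ^ n * b ∈ t.inf id := by
      rw [Submodule.mem_finsetInf]
      intro J hJ
      · by_cases hJ0 : J = J₀
        · subst hJ0; exact Ideal.mul_mem_right _ _ hn
        · have : b ∈ J := (Finset.inf_le (Finset.mem_erase.mpr ⟨hJ0, hJ⟩) : _ ≤ id J) hbmem
          exact Ideal.mul_mem_left _ _ this
    rw [ht] at hmem
    obtain ⟨d, hd⟩ := Ideal.mem_span_singleton'.mp hmem
    exact ⟨n, d, by rw [← hd]; ring⟩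
  -- the witness
  have hainj : Function.Injective (algebraMap S K) := IsFractionRing.injective S K
  have haK : algebraMap S K a ≠ 0 := fun h => ha0 (hainj (by simpa using h))
  refine ⟨algebraMap S K b * (algebraMap S K a)⁻¹, ?_, ?_⟩
  · -- membership in Gamma
    refine Set.mem_iInter.mpr fun r => Set.mem_iInter.mpr fun hr => Set.mem_iInter.mpr fun hr0 => ?_
    obtain ⟨n, d, hd⟩ := key r hr
    have hrK : algebraMap S K r ≠ 0 := fun h => hr0 (hainj (by simpa using h))
    have hx : algebraMap S K b * (algebraMap S K a)⁻¹
        = algebraMap S K d * ((algebraMap S K r)⁻¹) ^ n := by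
      rw [inv_pow]
      field_simp
      rw [mul_comm, ← map_pow, ← map_mul, ← map_mul, hd, mul_comm]
    rw [hx]
    show _ ∈ (Algebra.adjoin S {(algebraMap S K r)⁻¹}).toSubring
    exact Subring.mul_mem _ (Subalgebra.algebraMap_mem _ d)
      (Subring.pow_mem _ (Algebra.subset_adjoin (Set.mem_singleton _)) n)
  · -- not in S
    rintro ⟨u, hu⟩
    apply hbna
    have : algebraMap S K b = algebraMap S K (a * u) := by
      rw [map_mul]
      field_simp at hu
      rw [mul_comm] at hu
      exact hu.symm
    have hb : b = a * u := hainj this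
    rw [hb]; exact Ideal.mem_span_singleton'.mpr ⟨u, mul_comm u a⟩
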